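/- Let d ≥ 1, let ρ be a Hermitian positive semidefinite d×d complex matrix, and let O₁,…,O_n and Õ₁,…,Õ_m be d×d complex matrices satisfying Tr(ρ O_i) = 0 for all i and Tr(ρ Õ_l) = 0 for all l. Then Σ_{N≥0} (exp(−Tr ρ)/N!) · Tr(ρ^{⊗N} · (λ_{∅,N}(Õ₁,…,Õ_m))^* · λ_{∅,N}(O₁,…,O_n)) = δ_{n,m} · Σ_{π∈S_n} ∏_{i=1}^n Tr(ρ · Õ_i^* · O_{π(i)}), where ^* denotes conjugate transpose and S_n is the symmetric group on {1,…,n}. (This orthogonality shows that the vectors λ_∅(O₁,…,O_n) applied to the Poisson state vector form a basis exhibiting the GNS Hilbert space of the Poisson state as a symmetric Fock space.) -/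

import Mathlib

open scoped BigOperators ComplexOrder Matrix

namespace Stmt4
noncomputable section

/-- `N`-fold Kronecker tensor power of a `d × d` matrix. -/
def kronPow {d : ℕ} (ρ : Matrix (Fin d) (Fin d) ℂ) (N : ℕ) :
    Matrix (Fin N → Fin d) (Fin N → Fin d) ℂ :=
  Matrix.of fun f g => ∏ l : Fin N, ρ (f l) (g l)

/-- `O` placed in the `j`-th tensor slot, identity elsewhere. -/
def emb {d N : ℕ} (j : Fin N) (O : Matrix (Fin d) (Fin d) ℂ) :
    Matrix (Fin N → Fin d) (Fin N → Fin d) ℂ :=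
  Matrix.of fun f g =>
    O (f j) (g j) * ∏ l ∈ Finset.univ.erase j, (if f l = g l then (1 : ℂ) else 0)

/-- The `N`-th degree Poisson quantization map. -/
def lamDeg {d : ℕ} (N : ℕ) (O : Matrix (Fin d) (Fin d) ℂ) :
    Matrix (Fin N → Fin d) (Fin N → Fin d) ℂ :=
  ∑ j : Fin N, emb j O

/-- `λ_{∅,N}(O₁,…,O_n) = Σ_j Π_i emb_{j i}(O_i)`, where `j` runs over injective maps;
equivalently it is given by the recursion
`λ_{∅,N}(O₁,…,O_n) = λ_N(O₁)λ_{∅,N}(O₂,…,O_n) − Σ_{i≥2} λ_{∅,N}(O₂,…,O₁O_i,…,O_n)`. -/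
def lamEmpty {d N n : ℕ} (O : Fin n → Matrix (Fin d) (Fin d) ℂ) :
    Matrix (Fin N → Fin d) (Fin N → Fin d) ℂ :=
  ∑ j ∈ Finset.univ.filter (fun j : Fin n → Fin N => Function.Injective j),
    (List.ofFn fun i => emb (j i) (O i)).prod

/-- Tensor product of an `N`-tuple of matrices. -/
def tensor {d N : ℕ} (A : Fin N → Matrix (Fin d) (Fin d) ℂ) :
    Matrix (Fin N → Fin d) (Fin N → Fin d) ℂ :=
  Matrix.of fun f g => ∏ l : Fin N, A l (f l) (g l)

lemma tensor_apply {d N : ℕ} (A : Fin N → Matrix (Fin d) (Fin d) ℂ) (f g) :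
    tensor A f g = ∏ l, A l (f l) (g l) := rfl

lemma tensor_one {d N : ℕ} : tensor (d := d) (N := N) (fun _ => 1) = 1 := by
  ext f g
  simp only [tensor_apply, Matrix.one_apply]
  by_cases h : f = g
  · subst h; simp
  · rw [if_neg h]
    obtain ⟨l, hl⟩ := Function.ne_iff.mp h
    exact Finset.prod_eq_zero (Finset.mem_univ l) (if_neg hl)

lemma tensor_mul {d N : ℕ} (A B : Fin N → Matrix (Fin d) (Fin d) ℂ) :
    tensor A * tensor B = tensor (fun l => A l * B l) := by
  ext f g
  simp only [Matrix.mul_apply, tensor_apply]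
  simp_rw [← Finset.prod_mul_distrib]
  rw [Fintype.prod_sum]

lemma tensor_trace {d N : ℕ} (A : Fin N → Matrix (Fin d) (Fin d) ℂ) :
    (tensor A).trace = ∏ l, (A l).trace := by
  simp only [Matrix.trace, Matrix.diag, tensor_apply]
  exact (Fintype.prod_sum (fun l x => A l x x)).symm

lemma tensor_conjTranspose {d N : ℕ} (A : Fin N → Matrix (Fin d) (Fin d) ℂ) :
    (tensor A)ᴴ = tensor (fun l => (A l)ᴴ) := by
  ext f g
  simp [tensor_apply, Matrix.conjTranspose_apply]

lemma emb_eq {d N : ℕ} (j : Fin N) (O : Matrix (Fin d) (Fin d) ℂ) :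
    emb j O = tensor (fun l => if l = j then O else 1) := by
  ext f g
  rw [tensor_apply, ← Finset.mul_prod_erase Finset.univ _ (Finset.mem_univ j)]
  simp only [emb, Matrix.of_apply, if_pos rfl]
  congr 1
  refine Finset.prod_congr rfl fun l hl => ?_
  rw [if_neg (Finset.mem_erase.mp hl).1, Matrix.one_apply]

lemma prod_ofFn_eq_one {M : Type*} [Monoid M] {n : ℕ} {f : Fin n → M} (h : ∀ i, f i = 1) :
    (List.ofFn f).prod = 1 :=
  List.prod_eq_one fun x hx => by
    obtain ⟨i, hi⟩ := List.mem_ofFn.mp hx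
    rw [← hi]; exact h i

lemma prod_ofFn_eq_single {M : Type*} [Monoid M] : ∀ {n : ℕ} (f : Fin n → M) (i₀ : Fin n),
    (∀ i, i ≠ i₀ → f i = 1) → (List.ofFn f).prod = f i₀
  | 0, _, i₀, _ => i₀.elim0
  | n + 1, f, i₀, h => by
    rw [List.ofFn_succ, List.prod_cons]
    rcases Fin.eq_zero_or_eq_succ i₀ with h0 | ⟨i, rfl⟩
    · subst h0
      rw [prod_ofFn_eq_one (fun i => h i.succ (Fin.succ_ne_zero i)), mul_one]
    · rw [h 0 (Fin.succ_ne_zero i).symm, one_mul,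
        prod_ofFn_eq_single _ i
          (fun i' hi' => h i'.succ (fun he => hi' (Fin.succ_injective _ he)))]

/-- The product of the operators placed at slot `s`. -/
def slotProd {d N n : ℕ} (O : Fin n → Matrix (Fin d) (Fin d) ℂ) (j : Fin n → Fin N)
    (s : Fin N) : Matrix (Fin d) (Fin d) ℂ :=
  (List.ofFn fun i => if s = j i then O i else 1).prod

lemma slotProd_not_mem {d N n : ℕ} {O : Fin n → Matrix (Fin d) (Fin d) ℂ} {j : Fin n → Fin N}
    {s : Fin N} (h : s ∉ Finset.image j Finset.univ) : slotProd O j s = 1 :=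
  prod_ofFn_eq_one fun i => if_neg fun he => h (Finset.mem_image.mpr ⟨i, Finset.mem_univ i, he.symm⟩)

lemma slotProd_apply {d N n : ℕ} {O : Fin n → Matrix (Fin d) (Fin d) ℂ} {j : Fin n → Fin N}
    (hj : Function.Injective j) (l : Fin n) : slotProd O j (j l) = O l := by
  rw [slotProd, prod_ofFn_eq_single _ l (fun i hi => if_neg fun he => hi (hj he.symm)), if_pos rfl]

lemma prod_ofFn_tensor {d N : ℕ} : ∀ {n : ℕ} (g : Fin n → (Fin N → Matrix (Fin d) (Fin d) ℂ)),
    (List.ofFn fun i => tensor (g i)).prod = tensor (fun s => (List.ofFn fun i => g i s).prod)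
  | 0, g => by
    simp only [List.ofFn_zero, List.prod_nil]
    exact tensor_one.symm
  | n + 1, g => by
    rw [List.ofFn_succ, List.prod_cons, prod_ofFn_tensor _, tensor_mul]
    exact congrArg tensor (funext fun l => by rw [List.ofFn_succ, List.prod_cons])

lemma lamEmpty_eq {d N n : ℕ} (O : Fin n → Matrix (Fin d) (Fin d) ℂ) :
    lamEmpty (N := N) O
      = ∑ j ∈ Finset.univ.filter (fun j : Fin n → Fin N => Function.Injective j),
        tensor (slotProd O j) := by
  unfold lamEmpty
  refine Finset.sum_congr rfl fun j hj => ?_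
  simp_rw [emb_eq]
  exact prod_ofFn_tensor _

lemma trace_expand {d N n m : ℕ} (ρ : Matrix (Fin d) (Fin d) ℂ)
    (O : Fin n → Matrix (Fin d) (Fin d) ℂ) (Ot : Fin m → Matrix (Fin d) (Fin d) ℂ) :
    (kronPow ρ N * (lamEmpty (N := N) Ot)ᴴ * lamEmpty (N := N) O).trace
      = ∑ k ∈ Finset.univ.filter (fun k : Fin m → Fin N => Function.Injective k),
        ∑ j ∈ Finset.univ.filter (fun j : Fin n → Fin N => Function.Injective j),
          ∏ s : Fin N, (ρ * (slotProd Ot k s)ᴴ * slotProd O j s).trace := by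
  rw [lamEmpty_eq, lamEmpty_eq, show kronPow ρ N = tensor (fun _ => ρ) from rfl,
    Matrix.conjTranspose_sum]
  simp only [Finset.mul_sum, Finset.sum_mul, Matrix.trace_sum, tensor_conjTranspose,
    tensor_mul, tensor_trace]
  rw [Finset.sum_comm]

lemma trace_rho_conjT_eq_zero {d : ℕ} {ρ A : Matrix (Fin d) (Fin d) ℂ} (hρ : ρᴴ = ρ)
    (h : (ρ * A).trace = 0) : (ρ * Aᴴ).trace = 0 := by
  have e : ρ * Aᴴ = (A * ρ)ᴴ := by rw [Matrix.conjTranspose_mul, hρ]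
  rw [e, Matrix.trace_conjTranspose, Matrix.trace_mul_comm, h, star_zero]

lemma prod_slot_vanish {d N n m : ℕ} {ρ : Matrix (Fin d) (Fin d) ℂ} (hρ : ρᴴ = ρ)
    {O : Fin n → Matrix (Fin d) (Fin d) ℂ} {Ot : Fin m → Matrix (Fin d) (Fin d) ℂ}
    (hO : ∀ i, (ρ * O i).trace = 0) (hOt : ∀ l, (ρ * Ot l).trace = 0)
    {k : Fin m → Fin N} {j : Fin n → Fin N} (hk : Function.Injective k)
    (hj : Function.Injective j)
    (hne : Finset.image k Finset.univ ≠ Finset.image j Finset.univ) :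
    ∏ s : Fin N, (ρ * (slotProd Ot k s)ᴴ * slotProd O j s).trace = 0 := by
  have hns : ¬(Finset.image k Finset.univ ⊆ Finset.image j Finset.univ ∧
      Finset.image j Finset.univ ⊆ Finset.image k Finset.univ) :=
    fun hab => hne (subset_antisymm hab.1 hab.2)
  rcases not_and_or.mp hns with h | h <;> obtain ⟨s, hs1, hs2⟩ := Finset.not_subset.mp h
  · obtain ⟨l, -, rfl⟩ := Finset.mem_image.mp hs1
    refine Finset.prod_eq_zero (Finset.mem_univ (k l)) ?_
    rw [slotProd_apply hk, slotProd_not_mem hs2, mul_one]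
    exact trace_rho_conjT_eq_zero hρ (hOt l)
  · obtain ⟨i, -, rfl⟩ := Finset.mem_image.mp hs1
    refine Finset.prod_eq_zero (Finset.mem_univ (j i)) ?_
    rw [slotProd_apply hj, slotProd_not_mem hs2, Matrix.conjTranspose_one, mul_one]
    exact hO i

lemma card_inj (n N : ℕ) :
    (Finset.univ.filter (fun j : Fin n → Fin N => Function.Injective j)).card
      = N.descFactorial n := by
  rw [← Fintype.card_subtype,
    Fintype.card_congr (Equiv.subtypeInjectiveEquivEmbedding (Fin n) (Fin N)),
    Fintype.card_embedding_eq, Fintype.card_fin, Fintype.card_fin]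

lemma trace_eval {d N n : ℕ} {ρ : Matrix (Fin d) (Fin d) ℂ} (hρ : ρᴴ = ρ)
    (O Ot : Fin n → Matrix (Fin d) (Fin d) ℂ) (hO : ∀ i, (ρ * O i).trace = 0)
    (hOt : ∀ l, (ρ * Ot l).trace = 0) :
    (kronPow ρ N * (lamEmpty (N := N) Ot)ᴴ * lamEmpty (N := N) O).trace
      = (N.descFactorial n : ℂ) * ρ.trace ^ (N - n) *
        ∑ π : Equiv.Perm (Fin n), ∏ i : Fin n, (ρ * (Ot i)ᴴ * O (π i)).trace := by
  classical
  rw [trace_expand]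
  have step1 : ∀ k ∈ Finset.univ.filter (fun k : Fin n → Fin N => Function.Injective k),
      ∑ j ∈ Finset.univ.filter (fun j : Fin n → Fin N => Function.Injective j),
          ∏ s : Fin N, (ρ * (slotProd Ot k s)ᴴ * slotProd O j s).trace
        = ρ.trace ^ (N - n) *
          ∑ π : Equiv.Perm (Fin n), ∏ i : Fin n, (ρ * (Ot i)ᴴ * O (π i)).trace := by
    intro k hk
    rw [Finset.mem_filter] at hk
    have hk' := hk.2
    -- restrict to j with the same image
    rw [show (Finset.univ.filter (fun j : Fin n → Fin N => Function.Injective j))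
        = Finset.univ.filter (fun j : Fin n → Fin N => Function.Injective j ∧
            Finset.image j Finset.univ = Finset.image k Finset.univ) ∪
          Finset.univ.filter (fun j : Fin n → Fin N => Function.Injective j ∧
            Finset.image j Finset.univ ≠ Finset.image k Finset.univ) from by
      rw [← Finset.filter_or]
      exact Finset.filter_congr fun j _ => by tauto]
    rw [Finset.sum_union (by
      rw [Finset.disjoint_filter]
      exact fun j _ hj1 hj2 => hj2.2 hj1.2)]
    have h2 : ∑ j ∈ Finset.univ.filter (fun j : Fin n → Fin N => Function.Injective j ∧
          Finset.image j Finset.univ ≠ Finset.image k Finset.univ),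
        ∏ s : Fin N, (ρ * (slotProd Ot k s)ᴴ * slotProd O j s).trace = 0 :=
      Finset.sum_eq_zero fun j hj => by
        have hj' := (Finset.mem_filter.mp hj).2
        exact prod_slot_vanish hρ hO hOt hk' hj'.1 (Ne.symm hj'.2)
    rw [h2, add_zero]
    have himeq : ∀ σ : Equiv.Perm (Fin n),
        Finset.image (k ∘ σ) Finset.univ = Finset.image k Finset.univ := fun σ => by
      rw [← Finset.image_image, Finset.image_univ_equiv]
    have hbij : ∑ j ∈ Finset.univ.filter (fun j : Fin n → Fin N => Function.Injective j ∧
          Finset.image j Finset.univ = Finset.image k Finset.univ),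
        ∏ s : Fin N, (ρ * (slotProd Ot k s)ᴴ * slotProd O j s).trace
        = ∑ σ : Equiv.Perm (Fin n),
          ∏ s : Fin N, (ρ * (slotProd Ot k s)ᴴ * slotProd O (k ∘ σ) s).trace := by
      refine (Finset.sum_bij (fun (σ : Equiv.Perm (Fin n)) _ => (k ∘ σ : Fin n → Fin N))
        ?_ ?_ ?_ ?_).symm
      · intro σ _
        exact Finset.mem_filter.mpr ⟨Finset.mem_univ _,
          hk'.comp σ.injective, himeq σ⟩
      · intro σ₁ _ σ₂ _ he
        exact Equiv.ext fun i => hk' (congrFun he i)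
      · intro j hj
        rcases isEmpty_or_nonempty (Fin n) with hE | hNE
        · exact ⟨Equiv.refl _, Finset.mem_univ _, funext fun i => hE.elim i⟩
        have hj' := (Finset.mem_filter.mp hj).2
        obtain ⟨hjinj, hjim⟩ := hj'
        have hmem : ∀ i, ∃ l, k l = j i := fun i => by
          have hmi : j i ∈ Finset.image k Finset.univ :=
            hjim ▸ Finset.mem_image_of_mem j (Finset.mem_univ i)
          obtain ⟨l, -, hl⟩ := Finset.mem_image.mp hmi
          exact ⟨l, hl⟩
        have hkh : ∀ i, k (Function.invFun k (j i)) = j i := fun i => Function.invFun_eq (hmem i)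
        have hinj : Function.Injective (fun i => Function.invFun k (j i)) :=
          fun a b hab => hjinj (by rw [← hkh a, ← hkh b]; exact congrArg k hab)
        refine ⟨Equiv.ofBijective _ (Finite.injective_iff_bijective.mp hinj),
          Finset.mem_univ _, funext fun i => hkh i⟩
      · intro σ _
        rfl
    have hterm : ∀ σ : Equiv.Perm (Fin n),
        ∏ s : Fin N, (ρ * (slotProd Ot k s)ᴴ * slotProd O (k ∘ σ) s).trace
          = ρ.trace ^ (N - n) * ∏ l : Fin n, (ρ * (Ot l)ᴴ * O (σ⁻¹ l)).trace := by
      intro σ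
      rw [← Finset.prod_mul_prod_compl (Finset.image k Finset.univ)]
      have himc : ∀ s ∈ (Finset.image k Finset.univ)ᶜ,
          (ρ * (slotProd Ot k s)ᴴ * slotProd O (k ∘ σ) s).trace = ρ.trace := by
        intro s hs
        rw [Finset.mem_compl] at hs
        have hs2 : s ∉ Finset.image (k ∘ σ) Finset.univ := by rwa [himeq σ]
        rw [slotProd_not_mem hs, slotProd_not_mem hs2, Matrix.conjTranspose_one,
          mul_one, mul_one]
      rw [Finset.prod_congr rfl himc, Finset.prod_const, Finset.card_compl,
        Finset.card_image_of_injective _ hk', Finset.card_univ, Fintype.card_fin,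
        Fintype.card_fin, Finset.prod_image (fun a _ b _ h => hk' h), mul_comm]
      congr 1
      refine Finset.prod_congr rfl fun l _ => ?_
      rw [slotProd_apply hk', show k l = (k ∘ σ) (σ⁻¹ l) from by simp,
        slotProd_apply (hk'.comp σ.injective)]
    rw [hbij, Finset.sum_congr rfl (fun σ _ => hterm σ), ← Finset.mul_sum]
    congr 1
    exact Fintype.sum_equiv (Equiv.inv (Equiv.Perm (Fin n))) _ _ (fun σ => rfl)
  rw [Finset.sum_congr rfl step1, Finset.sum_const, card_inj, nsmul_eq_mul, mul_assoc]

lemma lamEmpty_eq_zero {d N n : ℕ} (h : N < n) (O : Fin n → Matrix (Fin d) (Fin d) ℂ) :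
    lamEmpty (N := N) O = 0 := by
  unfold lamEmpty
  rw [Finset.filter_false_of_mem, Finset.sum_empty]
  intro j _ hj
  have hc := Fintype.card_le_of_injective j hj
  simp only [Fintype.card_fin] at hc
  omega

lemma trace_zero_of_ne {d N n m : ℕ} {ρ : Matrix (Fin d) (Fin d) ℂ} (hnm : n ≠ m) (hρ : ρᴴ = ρ)
    {O : Fin n → Matrix (Fin d) (Fin d) ℂ} {Ot : Fin m → Matrix (Fin d) (Fin d) ℂ}
    (hO : ∀ i, (ρ * O i).trace = 0) (hOt : ∀ l, (ρ * Ot l).trace = 0) :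
    (kronPow ρ N * (lamEmpty (N := N) Ot)ᴴ * lamEmpty (N := N) O).trace = 0 := by
  rw [trace_expand]
  refine Finset.sum_eq_zero fun k hk => Finset.sum_eq_zero fun j hj => ?_
  have hk' := (Finset.mem_filter.mp hk).2
  have hj' := (Finset.mem_filter.mp hj).2
  refine prod_slot_vanish hρ hO hOt hk' hj' fun he => hnm ?_
  have hc := congrArg Finset.card he
  rwa [Finset.card_image_of_injective _ hk', Finset.card_image_of_injective _ hj',
    Finset.card_univ, Finset.card_univ, Fintype.card_fin, Fintype.card_fin, eq_comm] at hc

/-- Orthogonality of the `λ_∅` vectors in the Poisson state: for one-point-removed operators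
(`Tr(ρ O_i) = 0`, `Tr(ρ Õ_l) = 0`) one has
`Σ_N (e^{−Tr ρ}/N!) Tr(ρ^{⊗N} (λ_{∅,N}(Õ₁,…,Õ_m))^* λ_{∅,N}(O₁,…,O_n))
  = δ_{n,m} Σ_{π ∈ S_n} Π_i Tr(ρ Õ_i^* O_{π i})`. -/
theorem lamEmpty_orthogonality (d n m : ℕ) (hd : 1 ≤ d) (hn : 1 ≤ n) (hm : 1 ≤ m)
    (ρ : Matrix (Fin d) (Fin d) ℂ) (hρ : ρ.PosSemidef)
    (O : Fin n → Matrix (Fin d) (Fin d) ℂ) (Ot : Fin m → Matrix (Fin d) (Fin d) ℂ)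
    (hO : ∀ i, (ρ * O i).trace = 0) (hOt : ∀ l, (ρ * Ot l).trace = 0) :
    HasSum
      (fun N : ℕ => (Complex.exp (-ρ.trace) / (N.factorial : ℂ)) *
        (kronPow ρ N * (lamEmpty (N := N) Ot)ᴴ * lamEmpty (N := N) O).trace)
      (if h : n = m then
        ∑ π : Equiv.Perm (Fin n), ∏ i : Fin n,
          (ρ * (Ot (Fin.cast h i))ᴴ * O (π i)).trace
       else 0) := by
  have hherm : ρᴴ = ρ := hρ.1
  rcases eq_or_ne n m with rfl | hnm
  · rw [dif_pos rfl]
    simp only [Fin.cast_refl, id]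
    set t := ρ.trace with ht
    set S₀ := ∑ π : Equiv.Perm (Fin n), ∏ i : Fin n, (ρ * (Ot i)ᴴ * O (π i)).trace with hS₀
    set f : ℕ → ℂ := fun N => (Complex.exp (-t) / (N.factorial : ℂ)) *
        (kronPow ρ N * (lamEmpty (N := N) Ot)ᴴ * lamEmpty (N := N) O).trace with hf
    have hfact : ∀ M : ℕ, (((M + n).factorial : ℂ))⁻¹ * ((M + n).descFactorial n : ℂ)
        = ((M.factorial : ℂ))⁻¹ := by
      intro M
      have h0 : M.factorial * (M + n).descFactorial n = (M + n).factorial := by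
        have h1 := Nat.factorial_mul_descFactorial (Nat.le_add_left n M)
        rwa [Nat.add_sub_cancel] at h1
      have hM : (M.factorial : ℂ) ≠ 0 := Nat.cast_ne_zero.mpr (Nat.factorial_ne_zero M)
      have hMn : (((M + n).factorial : ℂ)) ≠ 0 := Nat.cast_ne_zero.mpr (Nat.factorial_ne_zero _)
      field_simp
      exact_mod_cast (mul_comm (M.factorial) _ ▸ h0)
    have hshift : ∀ M : ℕ, f (M + n) = Complex.exp (-t) * (t ^ M / (M.factorial : ℂ)) * S₀ := by
      intro M
      rw [hf]
      dsimp only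
      rw [trace_eval hherm O Ot hO hOt, Nat.add_sub_cancel, ← hS₀, ← ht]
      have h := hfact M
      rw [div_eq_mul_inv, div_eq_mul_inv]
      linear_combination Complex.exp (-t) * t ^ M * S₀ * h
    have hsum0 : HasSum (fun M => f (M + n)) S₀ := by
      have he := NormedSpace.expSeries_div_hasSum_exp t
      have h2 := (he.mul_left (Complex.exp (-t))).mul_right S₀
      have hval : Complex.exp (-t) * NormedSpace.exp t * S₀ = S₀ := by
        rw [← Complex.exp_eq_exp_ℂ, ← Complex.exp_add, neg_add_cancel, Complex.exp_zero, one_mul]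
      rw [hval] at h2
      simpa only [hshift] using h2
    have h3 := (hasSum_nat_add_iff (f := f) n).mp hsum0
    have hzero : ∑ i ∈ Finset.range n, f i = 0 := by
      refine Finset.sum_eq_zero fun i hi => ?_
      have hi' : i < n := Finset.mem_range.mp hi
      rw [hf]
      dsimp only
      rw [lamEmpty_eq_zero hi' O, Matrix.mul_zero, Matrix.trace_zero, mul_zero]
    rw [hzero, add_zero] at h3
    exact h3
  · rw [dif_neg hnm]
    have hfz : (fun N : ℕ => (Complex.exp (-ρ.trace) / (N.factorial : ℂ)) *
        (kronPow ρ N * (lamEmpty (N := N) Ot)ᴴ * lamEmpty (N := N) O).trace)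
        = fun _ => (0 : ℂ) := funext fun N => by
      rw [trace_zero_of_ne hnm hherm hO hOt, mul_zero]
    rw [hfz]
    exact hasSum_zero


end
end Stmt4
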